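/- Let g, s ∈ R^n with g ≠ 0, B ∈ R^{n×n} symmetric with η1 I ⪯ B ⪯ η2 I for 0 < η1 ≤ η2, P = [−g s], u = (α, β) a solution of Pᵀ B P u = −Pᵀ g, and d = −α g + β s. Then ‖d‖ ≥ (1/η2)‖g‖. -/

import Mathlib

open Matrix

lemma dpnn {n : ℕ} (v : Fin n → ℝ) : 0 ≤ v ⬝ᵥ v :=
  Finset.sum_nonneg fun i _ => mul_self_nonneg _

theorem dir_norm_lower_bound
    (n : ℕ) (g s : Fin n → ℝ) (hg : g ≠ 0)
    (η₁ η₂ : ℝ) (hη₁ : 0 < η₁) (hη : η₁ ≤ η₂)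
    (B : Matrix (Fin n) (Fin n) ℝ) (hBsymm : B.IsSymm)
    (hB : ∀ x : Fin n → ℝ, η₁ * (x ⬝ᵥ x) ≤ x ⬝ᵥ (B *ᵥ x) ∧ x ⬝ᵥ (B *ᵥ x) ≤ η₂ * (x ⬝ᵥ x))
    (P : Matrix (Fin n) (Fin 2) ℝ) (hP : P = Matrix.of fun i => ![-g i, s i])
    (α β : ℝ) (hu : (Pᵀ * B * P) *ᵥ ![α, β] = -(Pᵀ *ᵥ g))
    (d : Fin n → ℝ) (hd : d = (-α) • g + β • s) :
    Real.sqrt (d ⬝ᵥ d) ≥ (1/η₂) * Real.sqrt (g ⬝ᵥ g) := by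
  have hη₂ : 0 < η₂ := lt_of_lt_of_le hη₁ hη
  -- P *ᵥ ![α, β] = d
  have hPd : P *ᵥ ![α, β] = d := by
    funext i
    simp [hP, hd, Matrix.mulVec, dotProduct, Fin.sum_univ_two, mul_comm]
  -- first component of hu gives g ⬝ᵥ (B *ᵥ d) = -(g ⬝ᵥ g)
  have key1 : g ⬝ᵥ (B *ᵥ d) = -(g ⬝ᵥ g) := by
    have h0 := congrFun hu 0
    rw [Matrix.mul_assoc Pᵀ B P, ← Matrix.mulVec_mulVec,
      ← Matrix.mulVec_mulVec, hPd] at h0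
    have hl : (Pᵀ *ᵥ (B *ᵥ d)) 0 = -(g ⬝ᵥ (B *ᵥ d)) := by
      simp [Matrix.mulVec, dotProduct, hP, Finset.sum_neg_distrib, neg_mul]
    have hr : (-(Pᵀ *ᵥ g)) 0 = g ⬝ᵥ g := by
      simp [Matrix.mulVec, dotProduct, hP, neg_mul]
    rw [hl, hr] at h0
    linarith
  have hsym : d ⬝ᵥ (B *ᵥ g) = g ⬝ᵥ (B *ᵥ d) := by
    rw [dotProduct_comm, Matrix.dotProduct_mulVec, ← hBsymm.eq,
      Matrix.vecMul_transpose, hBsymm.eq]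
  set G := g ⬝ᵥ g with hG
  set D := d ⬝ᵥ d with hD
  set gBg := g ⬝ᵥ (B *ᵥ g) with hgBg
  set dBd := d ⬝ᵥ (B *ᵥ d) with hdBd
  have hGpos : 0 < G := by
    rcases lt_or_eq_of_le (dpnn g) with h | h
    · exact h
    · exact absurd ((dotProduct_self_eq_zero).mp h.symm) hg
  have hDnn : 0 ≤ D := dpnn d
  -- quadratic nonnegativity
  have hquad : ∀ t : ℝ, 0 ≤ dBd * (t * t) + (-2 * G) * t + gBg := by
    intro t
    have h := (hB (g + t • d)).1
    have hnn : 0 ≤ (g + t • d) ⬝ᵥ (B *ᵥ (g + t • d)) := by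
      have h2 : 0 ≤ η₁ * ((g + t • d) ⬝ᵥ (g + t • d)) :=
        mul_nonneg hη₁.le (dpnn _)
      linarith
    have hexp : (g + t • d) ⬝ᵥ (B *ᵥ (g + t • d)) =
        dBd * (t * t) + (-2 * G) * t + gBg := by
      have hbg : d ⬝ᵥ (B *ᵥ g) = -(g ⬝ᵥ g) := hsym.trans key1
      simp only [Matrix.mulVec_add, Matrix.mulVec_smul, add_dotProduct,
        dotProduct_add, smul_dotProduct, dotProduct_smul,
        smul_eq_mul, hdBd.symm]
      rw [key1, hbg]
      ring
    linarith [hexp ▸ hnn]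
  have hdisc : discrim dBd (-2 * G) gBg ≤ 0 := by
    rcases eq_or_lt_of_le (le_of_not_gt fun hneg : dBd < 0 => by
      -- dBd ≥ 0 from hB
      have := (hB d).1
      have := mul_nonneg hη₁.le hDnn
      linarith) with h | h
    · -- dBd = 0: then quadratic is linear; nonneg linear ⇒ slope 0? -2G ≠ 0, contradiction
      exfalso
      have h1 := hquad ((gBg + 1) / (2 * G))
      rw [← h] at h1
      have : (-2 * G) * ((gBg + 1) / (2 * G)) = -(gBg + 1) := by
        field_simp
      rw [this] at h1
      nlinarith
    · exact discrim_le_zero fun t => hquad t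
  -- discrim = 4G² - 4 dBd gBg ≤ 0
  have hkey : G ^ 2 ≤ dBd * gBg := by
    unfold discrim at hdisc
    nlinarith
  have hgBg_le : gBg ≤ η₂ * G := (hB g).2
  have hdBd_le : dBd ≤ η₂ * D := (hB d).2
  have hgBg_nn : 0 ≤ gBg := le_trans (mul_nonneg hη₁.le hGpos.le) (hB g).1
  have hG_le : G ≤ η₂ ^ 2 * D := by
    have h1 : dBd * gBg ≤ (η₂ * D) * (η₂ * G) := by
      have hdBd_nn : 0 ≤ dBd := le_trans (mul_nonneg hη₁.le hDnn) (hB d).1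
      nlinarith
    nlinarith
  -- conclude via sqrt
  have hs : Real.sqrt G ≤ η₂ * Real.sqrt D := by
    calc Real.sqrt G ≤ Real.sqrt (η₂ ^ 2 * D) := Real.sqrt_le_sqrt hG_le
    _ = η₂ * Real.sqrt D := by
        rw [Real.sqrt_mul (by positivity), Real.sqrt_sq hη₂.le]
  rw [ge_iff_le, div_mul_eq_mul_div, one_mul, div_le_iff₀ hη₂]
  linarith
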